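/- Let a < x0 < b be real numbers. For c > 0 set f_c(t) = c/√(2π t³) · exp(−c²/(2t)), and define g_a(t) = Σ_{k ∈ ℤ} (x0 − a + 2k(b−a))/√(2π t³) · exp(−(x0 − a + 2k(b−a))²/(2t)) and g_b(t) = Σ_{k ∈ ℤ} (b − x0 + 2k(b−a))/√(2π t³) · exp(−(b − x0 + 2k(b−a))²/(2t)). Then for every t > 0, g_a(t) = f_{x0−a}(t) − ∫_0^t f_{b−a}(t−τ) g_b(τ) dτ and g_b(t) = f_{b−x0}(t) − ∫_0^t f_{b−a}(t−τ) g_a(τ) dτ. -/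

import Mathlib

open MeasureTheory Set

/-- The first-hitting-time density of the level `c > 0` for a standard Brownian motion
started at `0`. -/
noncomputable def bmHitDensity (c t : ℝ) : ℝ :=
  c / Real.sqrt (2 * Real.pi * t ^ 3) * Real.exp (-c ^ 2 / (2 * t))


section BMAux
open Filter

lemma bm_neg (c t : ℝ) : bmHitDensity (-c) t = -bmHitDensity c t := by
  simp [bmHitDensity, neg_div, neg_sq]

lemma bm_nonneg {c : ℝ} (hc : 0 ≤ c) (t : ℝ) : 0 ≤ bmHitDensity c t :=
  mul_nonneg (div_nonneg hc (Real.sqrt_nonneg _)) (Real.exp_nonneg _)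

lemma bm_abs (c t : ℝ) : |bmHitDensity c t| = bmHitDensity |c| t := by
  rcases le_or_gt 0 c with h | h
  · rw [abs_of_nonneg h, abs_of_nonneg (bm_nonneg h t)]
  · have h1 : bmHitDensity c t ≤ 0 := by
      have := bm_nonneg (c := -c) (by linarith) t
      rw [bm_neg] at this; linarith
    rw [abs_of_nonpos h1, abs_of_neg h, ← bm_neg]

lemma self_le_exp_sq (y : ℝ) : y ≤ Real.exp (y ^ 2) := by
  have h1 : y ≤ 1 + y ^ 2 := by nlinarith [sq_nonneg (y - 1)]
  linarith [Real.add_one_le_exp (y ^ 2)]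

lemma bm_le {t : ℝ} (ht : 0 < t) (c : ℝ) :
    |bmHitDensity c t| ≤
      2 * Real.sqrt t / Real.sqrt (2 * Real.pi * t ^ 3) * Real.exp (-c ^ 2 / (4 * t)) := by
  have hst : 0 < Real.sqrt t := Real.sqrt_pos.2 ht
  have h1 : |bmHitDensity c t| = |c| / Real.sqrt (2 * Real.pi * t ^ 3) * Real.exp (-c ^ 2 / (2 * t)) := by
    rw [bmHitDensity, abs_mul, abs_div, abs_of_nonneg (Real.sqrt_nonneg _),
      abs_of_nonneg (Real.exp_pos _).le]
  have h2 : |c| ≤ 2 * Real.sqrt t * Real.exp (c ^ 2 / (4 * t)) := by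
    have := self_le_exp_sq (|c| / (2 * Real.sqrt t))
    have hsq : (|c| / (2 * Real.sqrt t)) ^ 2 = c ^ 2 / (4 * t) := by
      rw [div_pow, sq_abs, mul_pow, Real.sq_sqrt ht.le]; norm_num
    rw [hsq, div_le_iff₀ (by positivity)] at this
    linarith [this]
  calc |bmHitDensity c t| ≤ (2 * Real.sqrt t * Real.exp (c ^ 2 / (4 * t))) / Real.sqrt (2 * Real.pi * t ^ 3) * Real.exp (-c ^ 2 / (2 * t)) := by
        rw [h1]
        gcongr
      _ = 2 * Real.sqrt t / Real.sqrt (2 * Real.pi * t ^ 3) * Real.exp (-c ^ 2 / (4 * t)) := by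
        rw [show -c ^ 2 / (4 * t) = c ^ 2 / (4 * t) + -c ^ 2 / (2 * t) by field_simp; ring,
          Real.exp_add]
        ring

lemma summable_exp_nat {t : ℝ} (ht : 0 < t) (A B : ℝ) (hB : 0 < B) :
    Summable fun n : ℕ => Real.exp (-(A + B * n) ^ 2 / (4 * t)) := by
  set N : ℕ := ⌈|2 * A * B - 4 * t| / B ^ 2⌉₊ with hN
  rw [← summable_nat_add_iff N]
  refine Summable.of_nonneg_of_le (fun n => (Real.exp_pos _).le) (fun n => ?_)
    Real.summable_exp_neg_nat
  rw [Real.exp_le_exp]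
  have hceil : |2 * A * B - 4 * t| / B ^ 2 ≤ (N : ℝ) := Nat.le_ceil _
  have h2 : |2 * A * B - 4 * t| ≤ B ^ 2 * ((n : ℝ) + N) := by
    rw [div_le_iff₀ (by positivity)] at hceil
    nlinarith [Nat.cast_nonneg (α := ℝ) n, sq_nonneg B]
  have h3 := (abs_le.1 h2).1
  have hnN : (0 : ℝ) ≤ (n : ℝ) + N := by positivity
  push_cast
  rw [neg_div, neg_le_neg_iff, le_div_iff₀ (by positivity)]
  nlinarith [mul_le_mul_of_nonneg_right h3 hnN, sq_nonneg A, Nat.cast_nonneg (α := ℝ) N]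

lemma summable_exp_int {t L : ℝ} (ht : 0 < t) (hL : 0 < L) (r : ℝ) :
    Summable fun k : ℤ => Real.exp (-(r + 2 * (k : ℝ) * L) ^ 2 / (4 * t)) := by
  apply Summable.of_nat_of_neg_add_one
  · exact (summable_exp_nat ht r (2 * L) (by linarith)).congr
      (fun n => by congr 1; push_cast; ring)
  · exact (summable_exp_nat ht (2 * L - r) (2 * L) (by linarith)).congr
      (fun n => by congr 1; push_cast; ring)

lemma summable_bm {t L : ℝ} (ht : 0 < t) (hL : 0 < L) (r : ℝ) :
    Summable fun k : ℤ => bmHitDensity (r + 2 * (k : ℝ) * L) t := by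
  apply Summable.of_norm_bounded
    (g := fun k : ℤ => 2 * Real.sqrt t / Real.sqrt (2 * Real.pi * t ^ 3) *
      Real.exp (-(r + 2 * (k : ℝ) * L) ^ 2 / (4 * t)))
    ((summable_exp_int ht hL r).mul_left _)
  exact fun k => bm_le ht _

lemma summable_bm_shift {t L : ℝ} (ht : 0 < t) (hL : 0 < L) (r : ℝ) :
    Summable fun k : ℤ => bmHitDensity (L + |r + 2 * (k : ℝ) * L|) t := by
  apply Summable.of_norm_bounded
    (g := fun k : ℤ => 2 * Real.sqrt t / Real.sqrt (2 * Real.pi * t ^ 3) *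
      Real.exp (-(r + 2 * (k : ℝ) * L) ^ 2 / (4 * t)))
    ((summable_exp_int ht hL r).mul_left _)
  intro k
  refine le_trans (bm_le ht _) ?_
  have h1 : (r + 2 * (k : ℝ) * L) ^ 2 ≤ (L + |r + 2 * (k : ℝ) * L|) ^ 2 := by
    rw [← sq_abs (r + 2 * (k : ℝ) * L)]
    exact pow_le_pow_left₀ (abs_nonneg _) (by linarith [abs_nonneg (r + 2 * (k : ℝ) * L)]) 2
  have h2 : Real.exp (-(L + |r + 2 * (k : ℝ) * L|) ^ 2 / (4 * t)) ≤
      Real.exp (-(r + 2 * (k : ℝ) * L) ^ 2 / (4 * t)) := by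
    rw [Real.exp_le_exp, div_le_div_iff₀ (by positivity) (by positivity)]
    nlinarith [h1]
  exact mul_le_mul_of_nonneg_left h2 (by positivity)
noncomputable def uu (c d t τ : ℝ) : ℝ := ((c+d)*τ - d*t) / Real.sqrt (t*(τ*(t-τ)))

noncomputable def uu' (c d t τ : ℝ) : ℝ :=
  t^2*(c*τ + d*(t-τ)) / (2*Real.sqrt (t*(τ*(t-τ)))^3)

lemma uu_hasDeriv {c d t : ℝ} (ht : 0 < t) {τ : ℝ} (hτ : τ ∈ Ioo 0 t) :
    HasDerivAt (uu c d t) (uu' c d t τ) τ := by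
  obtain ⟨hτ0, hτt⟩ := hτ
  have hsub : 0 < t - τ := by linarith
  have hh : (0:ℝ) < t*(τ*(t-τ)) := by positivity
  have hS : 0 < Real.sqrt (t*(τ*(t-τ))) := Real.sqrt_pos.2 hh
  have hS2 : Real.sqrt (t*(τ*(t-τ)))^2 = t*(τ*(t-τ)) := Real.sq_sqrt hh.le
  have hg : HasDerivAt (fun τ : ℝ => (c+d)*τ - d*t) (c+d) τ := by
    simpa using ((hasDerivAt_id τ).const_mul (c+d)).sub_const (d*t)
  have hh' : HasDerivAt (fun τ : ℝ => t*(τ*(t-τ))) (t*(1*(t-τ) + τ*(0-1))) τ := by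
    exact ((hasDerivAt_id τ).mul ((hasDerivAt_const τ t).sub (hasDerivAt_id τ))).const_mul t
  have hsqrt : HasDerivAt (fun τ : ℝ => Real.sqrt (t*(τ*(t-τ))))
      (1 / (2*Real.sqrt (t*(τ*(t-τ)))) * (t*(1*(t-τ) + τ*(0-1)))) τ :=
    (Real.hasDerivAt_sqrt hh.ne').comp τ hh'
  have hdiv := hg.div hsqrt hS.ne'
  refine hdiv.congr_deriv (Eq.symm ?_)
  unfold uu'
  set S := Real.sqrt (t*(τ*(t-τ))) with hSdef
  have hR : ((c+d)*S - ((c+d)*τ - d*t)*(1/(2*S)*(t*(1*(t-τ) + τ*(0-1)))))/S^2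
      = (2*(c+d)*S^2 - ((c+d)*τ - d*t)*(t*(1*(t-τ) + τ*(0-1))))/(2*(S^2*S)) := by
    field_simp
  rw [hR, hS2, show S^3 = S^2*S by ring, hS2]
  rw [div_eq_div_iff (by positivity) (by positivity)]
  ring


noncomputable def FF (c d t x : ℝ) : ℝ :=
  Real.exp (-(c+d)^2/(2*t)) / (2*Real.pi*(t*Real.sqrt t)) * Real.exp (-x^2/2) *
    ((c+d) + (d-c)*Real.sqrt t*x / Real.sqrt (x^2*t + 4*(c*d)))

lemma uu'_pos {c d t : ℝ} (hc : 0 < c) (hd : 0 < d) (ht : 0 < t) {τ : ℝ} (hτ : τ ∈ Ioo 0 t) :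
    0 < uu' c d t τ := by
  obtain ⟨hτ0, hτt⟩ := hτ
  have hsub : 0 < t - τ := by linarith
  have hh : (0:ℝ) < t*(τ*(t-τ)) := by positivity
  have hS : 0 < Real.sqrt (t*(τ*(t-τ))) := Real.sqrt_pos.2 hh
  unfold uu'
  have hnum : 0 < t^2*(c*τ + d*(t-τ)) := by positivity
  positivity

lemma key_pointwise {c d t : ℝ} (hc : 0 < c) (hd : 0 < d) (ht : 0 < t) {τ : ℝ}
    (hτ : τ ∈ Ioo 0 t) :
    uu' c d t τ * FF c d t (uu c d t τ) = bmHitDensity c (t - τ) * bmHitDensity d τ := by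
  obtain ⟨hτ0, hτt⟩ := hτ
  have hsub : 0 < t - τ := by linarith
  have hh : (0:ℝ) < t*(τ*(t-τ)) := by positivity
  have hM : 0 < c*τ + d*(t-τ) := by positivity
  have hSfac : Real.sqrt (t*(τ*(t-τ))) = Real.sqrt t*(Real.sqrt τ*Real.sqrt (t-τ)) := by
    rw [Real.sqrt_mul ht.le, Real.sqrt_mul hτ0.le]
  have hu2 : (uu c d t τ)^2 = ((c+d)*τ - d*t)^2 / (t*(τ*(t-τ))) := by
    rw [uu, div_pow, Real.sq_sqrt hh.le]
  have hC : Real.sqrt ((uu c d t τ)^2*t + 4*(c*d)) =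
      (c*τ + d*(t-τ)) / (Real.sqrt τ*Real.sqrt (t-τ)) := by
    have h1 : (uu c d t τ)^2*t + 4*(c*d) =
        ((c*τ + d*(t-τ))/(Real.sqrt τ*Real.sqrt (t-τ)))^2 := by
      rw [hu2, div_pow, mul_pow, Real.sq_sqrt hτ0.le, Real.sq_sqrt hsub.le]
      field_simp
      ring
    rw [h1, Real.sqrt_sq (by positivity)]
  have hB : Real.exp (-(c+d)^2/(2*t)) * Real.exp (-(uu c d t τ)^2/2)
      = Real.exp (-c^2/(2*(t-τ))) * Real.exp (-d^2/(2*τ)) := by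
    rw [← Real.exp_add, ← Real.exp_add]
    congr 1
    rw [hu2]
    field_simp
    ring
  have hD : (c+d) + (d-c)*Real.sqrt t*(uu c d t τ) / Real.sqrt ((uu c d t τ)^2*t + 4*(c*d))
      = 2*(c*d*t) / (c*τ + d*(t-τ)) := by
    rw [hC, uu, hSfac]
    have hst : 0 < Real.sqrt t := Real.sqrt_pos.2 ht
    have hsτ : 0 < Real.sqrt τ := Real.sqrt_pos.2 hτ0
    have hsσ : 0 < Real.sqrt (t-τ) := Real.sqrt_pos.2 hsub
    field_simp
    ring
  have h3σ : Real.sqrt (2*Real.pi*(t-τ)^3) =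
      Real.sqrt (2*Real.pi)*((t-τ)*Real.sqrt (t-τ)) := by
    rw [show 2*Real.pi*(t-τ)^3 = (2*Real.pi)*(((t-τ)^2)*(t-τ)) by ring,
      Real.sqrt_mul (by positivity : (0:ℝ) ≤ 2*Real.pi),
      Real.sqrt_mul (sq_nonneg (t-τ)), Real.sqrt_sq hsub.le]
  have h3τ : Real.sqrt (2*Real.pi*τ^3) = Real.sqrt (2*Real.pi)*(τ*Real.sqrt τ) := by
    rw [show 2*Real.pi*τ^3 = (2*Real.pi)*((τ^2)*τ) by ring,
      Real.sqrt_mul (by positivity : (0:ℝ) ≤ 2*Real.pi),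
      Real.sqrt_mul (sq_nonneg τ), Real.sqrt_sq hτ0.le]
  have hA : uu' c d t τ * FF c d t (uu c d t τ) =
      (uu' c d t τ * (2*(c*d*t) / (c*τ + d*(t-τ))) / (2*Real.pi*(t*Real.sqrt t))) *
        (Real.exp (-(c+d)^2/(2*t)) * Real.exp (-(uu c d t τ)^2/2)) := by
    rw [FF, hD]
    ring
  have hA2 : bmHitDensity c (t-τ) * bmHitDensity d τ =
      (c/(Real.sqrt (2*Real.pi)*((t-τ)*Real.sqrt (t-τ))) *
        (d/(Real.sqrt (2*Real.pi)*(τ*Real.sqrt τ)))) *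
        (Real.exp (-c^2/(2*(t-τ))) * Real.exp (-d^2/(2*τ))) := by
    rw [bmHitDensity, bmHitDensity, h3σ, h3τ]
    ring
  rw [hA, hA2, ← hB]
  congr 1
  rw [uu', hSfac]
  set st := Real.sqrt t with hstdef
  set sτ := Real.sqrt τ with hsτdef
  set sσ := Real.sqrt (t-τ) with hsσdef
  set sπ := Real.sqrt (2*Real.pi) with hsπdef
  have hst : 0 < st := Real.sqrt_pos.2 ht
  have hsτ : 0 < sτ := Real.sqrt_pos.2 hτ0
  have hsσ : 0 < sσ := Real.sqrt_pos.2 hsub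
  have hsπ : 0 < sπ := Real.sqrt_pos.2 (by positivity)
  have hst2 : st^2 = t := Real.sq_sqrt ht.le
  have hsτ2 : sτ^2 = τ := Real.sq_sqrt hτ0.le
  have hsσ2 : sσ^2 = t - τ := Real.sq_sqrt hsub.le
  have hsπ2 : sπ^2 = 2*Real.pi := Real.sq_sqrt (by positivity)
  have hM' : (0:ℝ) < c*sτ^2 + d*sσ^2 := by rw [hsτ2, hsσ2]; exact hM
  rw [← hsσ2, ← hsτ2, ← hst2, ← hsπ2]
  field_simp

lemma gauss_int : Integrable (fun x : ℝ => Real.exp (-x^2/2)) := by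
  have h := integrable_exp_neg_mul_sq (show (0:ℝ) < 1/2 by norm_num)
  simp_rw [show ∀ x : ℝ, -(1/2)*x^2 = -x^2/2 from fun x => by ring] at h
  exact h

lemma gauss_int_val : ∫ x : ℝ, Real.exp (-x^2/2) = Real.sqrt (2*Real.pi) := by
  have h := integral_gaussian (1/2 : ℝ)
  simp_rw [show ∀ x : ℝ, -(1/2:ℝ)*x^2 = -x^2/2 from fun x => by ring] at h
  rw [h, show Real.pi/(1/2:ℝ) = 2*Real.pi by ring]

lemma odd_part_cont {c d t : ℝ} (hc : 0 < c) (hd : 0 < d) (ht : 0 < t) :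
    Continuous (fun x : ℝ => x / Real.sqrt (x^2*t + 4*(c*d)) * Real.exp (-x^2/2)) := by
  apply Continuous.mul
  · apply Continuous.div continuous_id (Real.continuous_sqrt.comp (by continuity))
    intro x
    exact ne_of_gt (Real.sqrt_pos.2 (by positivity))
  · continuity

lemma odd_part_bound {c d t : ℝ} (hc : 0 < c) (hd : 0 < d) (ht : 0 < t) (x : ℝ) :
    ‖x / Real.sqrt (x^2*t + 4*(c*d)) * Real.exp (-x^2/2)‖ ≤
      1/Real.sqrt t * Real.exp (-x^2/2) := by
  have hS : 0 < Real.sqrt (x^2*t + 4*(c*d)) := Real.sqrt_pos.2 (by positivity)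
  have hst : 0 < Real.sqrt t := Real.sqrt_pos.2 ht
  rw [norm_mul, norm_div, Real.norm_eq_abs, Real.norm_eq_abs, Real.norm_eq_abs,
    abs_of_nonneg (Real.exp_pos _).le, abs_of_nonneg hS.le]
  have hkey : |x| * Real.sqrt t ≤ Real.sqrt (x^2*t + 4*(c*d)) := by
    have h1 : Real.sqrt (x^2*t) ≤ Real.sqrt (x^2*t + 4*(c*d)) :=
      Real.sqrt_le_sqrt (by nlinarith)
    rwa [Real.sqrt_mul (sq_nonneg x), Real.sqrt_sq_eq_abs] at h1
  have h2 : |x| / Real.sqrt (x^2*t + 4*(c*d)) ≤ 1 / Real.sqrt t := by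
    rw [div_le_div_iff₀ hS hst]
    nlinarith
  exact mul_le_mul_of_nonneg_right h2 (Real.exp_pos _).le

lemma odd_part_int {c d t : ℝ} (hc : 0 < c) (hd : 0 < d) (ht : 0 < t) :
    Integrable (fun x : ℝ => x / Real.sqrt (x^2*t + 4*(c*d)) * Real.exp (-x^2/2)) :=
  Integrable.mono (gauss_int.const_mul (1/Real.sqrt t))
    (odd_part_cont hc hd ht).aestronglyMeasurable
    (ae_of_all _ fun x => by
      refine le_trans (odd_part_bound hc hd ht x) ?_
      rw [Real.norm_eq_abs, abs_mul, abs_of_nonneg (Real.exp_pos _).le]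
      exact mul_le_mul_of_nonneg_right (le_abs_self _) (Real.exp_pos _).le)

lemma odd_part_zero {c d t : ℝ} (hc : 0 < c) (hd : 0 < d) (ht : 0 < t) :
    ∫ x : ℝ, x / Real.sqrt (x^2*t + 4*(c*d)) * Real.exp (-x^2/2) = 0 := by
  set O := fun x : ℝ => x / Real.sqrt (x^2*t + 4*(c*d)) * Real.exp (-x^2/2) with hO
  have hneg : ∀ x, O (-x) = -O x := by
    intro x
    simp only [hO, neg_sq, neg_div]
    ring
  have h1 : ∫ x, O x = ∫ x, O (-x) := (integral_neg_eq_self O volume).symm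
  simp_rw [hneg, integral_neg] at h1
  linarith

lemma FF_split {c d t : ℝ} (x : ℝ) :
    FF c d t x =
      (Real.exp (-(c+d)^2/(2*t)) / (2*Real.pi*(t*Real.sqrt t)) * (c+d)) * Real.exp (-x^2/2)
      + (Real.exp (-(c+d)^2/(2*t)) / (2*Real.pi*(t*Real.sqrt t)) * ((d-c)*Real.sqrt t)) *
          (x / Real.sqrt (x^2*t + 4*(c*d)) * Real.exp (-x^2/2)) := by
  rw [FF]
  ring

lemma FF_integrable {c d t : ℝ} (hc : 0 < c) (hd : 0 < d) (ht : 0 < t) :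
    Integrable (FF c d t) := by
  apply Integrable.congr ((gauss_int.const_mul _).add ((odd_part_int hc hd ht).const_mul _))
  exact ae_of_all _ fun x => (FF_split x).symm

lemma FF_integral {c d t : ℝ} (hc : 0 < c) (hd : 0 < d) (ht : 0 < t) :
    ∫ x : ℝ, FF c d t x = bmHitDensity (c+d) t := by
  have h1 : ∫ x : ℝ, FF c d t x =
      (Real.exp (-(c+d)^2/(2*t)) / (2*Real.pi*(t*Real.sqrt t)) * (c+d)) * Real.sqrt (2*Real.pi) := by
    simp_rw [FF_split (c := c) (d := d) (t := t)]
    rw [integral_add (gauss_int.const_mul _) ((odd_part_int hc hd ht).const_mul _),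
      integral_const_mul, integral_const_mul, odd_part_zero hc hd ht, gauss_int_val]
    ring
  rw [h1, bmHitDensity]
  rw [show 2*Real.pi*t^3 = (2*Real.pi)*((t^2)*t) by ring,
    Real.sqrt_mul (by positivity : (0:ℝ) ≤ 2*Real.pi), Real.sqrt_mul (sq_nonneg t),
    Real.sqrt_sq ht.le]
  have hst : 0 < Real.sqrt t := Real.sqrt_pos.2 ht
  have hsπ : 0 < Real.sqrt (2*Real.pi) := Real.sqrt_pos.2 (by positivity)
  have hsπ2 : Real.sqrt (2*Real.pi)^2 = 2*Real.pi := Real.sq_sqrt (by positivity)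
  rw [← hsπ2]
  field_simp
  ring
  rw [Real.sq_sqrt (sq_nonneg _)]

lemma conv_lemma {c d t : ℝ} (hc : 0 < c) (hd : 0 < d) (ht : 0 < t) :
    IntegrableOn (fun τ => bmHitDensity c (t-τ) * bmHitDensity d τ) (Ioo 0 t) ∧
    ∫ τ in Ioo 0 t, bmHitDensity c (t-τ) * bmHitDensity d τ = bmHitDensity (c+d) t := by
  have hderiv : ∀ τ ∈ Ioo 0 t, HasDerivWithinAt (uu c d t) (uu' c d t τ) (Ioo 0 t) τ :=
    fun τ hτ => (uu_hasDeriv ht hτ).hasDerivWithinAt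
  have hmono : StrictMonoOn (uu c d t) (Ioo 0 t) := by
    apply strictMonoOn_of_deriv_pos (convex_Ioo 0 t)
    · exact fun τ hτ => (uu_hasDeriv ht hτ).continuousAt.continuousWithinAt
    · intro τ hτ
      rw [interior_Ioo] at hτ
      rw [(uu_hasDeriv ht hτ).deriv]
      exact uu'_pos hc hd ht hτ
  have hinj : InjOn (uu c d t) (Ioo 0 t) := hmono.injOn
  -- limits at the endpoints
  have hcont_num : Continuous fun τ : ℝ => (c+d)*τ - d*t := by continuity
  have hcont_den : Continuous fun τ : ℝ => Real.sqrt (t*(τ*(t-τ))) :=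
    Real.continuous_sqrt.comp (by continuity)
  have hden_pos : ∀ τ ∈ Ioo 0 t, 0 < Real.sqrt (t*(τ*(t-τ))) := by
    intro τ hτ
    obtain ⟨h1, h2⟩ := hτ
    have : 0 < t - τ := by linarith
    exact Real.sqrt_pos.2 (by positivity)
  have hinv0 : Tendsto (fun τ => (Real.sqrt (t*(τ*(t-τ))))⁻¹)
      (nhdsWithin 0 (Ioo 0 t)) atTop := by
    apply tendsto_inv_nhdsGT_zero.comp
    apply tendsto_nhdsWithin_of_tendsto_nhds_of_eventually_within
    · have := (hcont_den.tendsto 0).mono_left (nhdsWithin_le_nhds (s := Ioo 0 t))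
      simpa using this
    · exact eventually_nhdsWithin_of_forall hden_pos
  have hinvt : Tendsto (fun τ => (Real.sqrt (t*(τ*(t-τ))))⁻¹)
      (nhdsWithin t (Ioo 0 t)) atTop := by
    apply tendsto_inv_nhdsGT_zero.comp
    apply tendsto_nhdsWithin_of_tendsto_nhds_of_eventually_within
    · have := (hcont_den.tendsto t).mono_left (nhdsWithin_le_nhds (s := Ioo 0 t))
      simpa using this
    · exact eventually_nhdsWithin_of_forall hden_pos
  have hlim0 : Tendsto (uu c d t) (nhdsWithin 0 (Ioo 0 t)) atBot := by
    have h1 : Tendsto (fun τ : ℝ => (c+d)*τ - d*t) (nhdsWithin 0 (Ioo 0 t))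
        (nhds ((c+d)*0 - d*t)) := (hcont_num.tendsto 0).mono_left nhdsWithin_le_nhds
    have h2 := h1.neg_mul_atTop (by nlinarith : (c+d)*0 - d*t < 0) hinv0
    exact h2.congr (fun τ => by rw [uu, div_eq_mul_inv])
  have hlimt : Tendsto (uu c d t) (nhdsWithin t (Ioo 0 t)) atTop := by
    have h1 : Tendsto (fun τ : ℝ => (c+d)*τ - d*t) (nhdsWithin t (Ioo 0 t))
        (nhds ((c+d)*t - d*t)) := (hcont_num.tendsto t).mono_left nhdsWithin_le_nhds
    have h2 := h1.pos_mul_atTop (by nlinarith : 0 < (c+d)*t - d*t) hinvt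
    exact h2.congr (fun τ => by rw [uu, div_eq_mul_inv])
  have hnb0 : (nhdsWithin (0:ℝ) (Ioo 0 t)).NeBot :=
    mem_closure_iff_nhdsWithin_neBot.mp (by
      rw [closure_Ioo ht.ne]; exact ⟨le_refl 0, ht.le⟩)
  have hnbt : (nhdsWithin t (Ioo 0 t)).NeBot :=
    mem_closure_iff_nhdsWithin_neBot.mp (by
      rw [closure_Ioo ht.ne]; exact ⟨ht.le, le_refl t⟩)
  have himg : uu c d t '' (Ioo 0 t) = univ := by
    rw [eq_univ_iff_forall]
    intro y
    obtain ⟨τ₁, hy1, hτ1⟩ :=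
      ((hlim0.eventually (eventually_lt_atBot y)).and self_mem_nhdsWithin).exists
    obtain ⟨τ₂, hy2, hτ2⟩ :=
      ((hlimt.eventually (eventually_gt_atTop y)).and self_mem_nhdsWithin).exists
    rcases le_or_gt τ₁ τ₂ with hle | hlt
    · have hsub : Icc τ₁ τ₂ ⊆ Ioo 0 t := Icc_subset_Ioo hτ1.1 hτ2.2
      have hcontIcc : ContinuousOn (uu c d t) (Icc τ₁ τ₂) :=
        fun τ hτ => ((uu_hasDeriv ht (hsub hτ)).continuousAt).continuousWithinAt
      obtain ⟨τ, hτmem, hτy⟩ := intermediate_value_Icc hle hcontIcc ⟨hy1.le, hy2.le⟩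
      exact ⟨τ, hsub hτmem, hτy⟩
    · exact absurd (hmono hτ2 hτ1 hlt) (by linarith)
  have hcongr : EqOn (fun τ => |uu' c d t τ| • FF c d t (uu c d t τ))
      (fun τ => bmHitDensity c (t-τ) * bmHitDensity d τ) (Ioo 0 t) := by
    intro τ hτ
    simp only [smul_eq_mul]
    rw [abs_of_pos (uu'_pos hc hd ht hτ)]
    exact key_pointwise hc hd ht hτ
  constructor
  · have h1 : IntegrableOn (FF c d t) (uu c d t '' Ioo 0 t) := by
      rw [himg]
      exact (FF_integrable hc hd ht).integrableOn
    have h2 := (integrableOn_image_iff_integrableOn_abs_deriv_smul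
      measurableSet_Ioo hderiv hinj (FF c d t)).mp h1
    exact h2.congr_fun hcongr measurableSet_Ioo
  · have hchg := integral_image_eq_integral_abs_deriv_smul
      measurableSet_Ioo hderiv hinj (FF c d t)
    rw [himg] at hchg
    calc ∫ τ in Ioo 0 t, bmHitDensity c (t-τ) * bmHitDensity d τ
        = ∫ τ in Ioo 0 t, |uu' c d t τ| • FF c d t (uu c d t τ) :=
          (setIntegral_congr_fun measurableSet_Ioo hcongr).symm
      _ = ∫ x in univ, FF c d t x := hchg.symm
      _ = ∫ x, FF c d t x := by rw [Measure.restrict_univ]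
      _ = bmHitDensity (c+d) t := FF_integral hc hd ht

def eta (k : ℤ) : ℤ := if 0 ≤ k then -k-1 else -k

lemma eta_inj : Function.Injective eta := by
  intro a b h
  unfold eta at h
  split_ifs at h <;> omega

lemma eta_ne_zero (k : ℤ) : eta k ≠ 0 := by
  unfold eta; split_ifs <;> omega

lemma eta_range {j : ℤ} (hj : j ≠ 0) : j ∈ Set.range eta := by
  rcases lt_or_gt_of_ne hj with h | h
  · exact ⟨-j-1, by unfold eta; rw [if_pos (by omega)]; omega⟩
  · exact ⟨-j, by unfold eta; rw [if_neg (by omega)]; omega⟩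

lemma bm_meas (c : ℝ) : Measurable (bmHitDensity c) := by
  unfold bmHitDensity
  exact (measurable_const.div (Real.continuous_sqrt.measurable.comp
      ((measurable_id.pow_const 3).const_mul (2 * Real.pi)))).mul
    (Real.measurable_exp.comp (measurable_const.div (measurable_id.const_mul 2)))

lemma main_aux (L u v t : ℝ) (hu : 0 < u) (hv : 0 < v) (huv : u + v = L) (ht : 0 < t) :
    (∑' k : ℤ, (u + 2 * (k : ℝ) * L) / Real.sqrt (2 * Real.pi * t ^ 3) *
        Real.exp (-(u + 2 * (k : ℝ) * L) ^ 2 / (2 * t))) =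
      bmHitDensity u t -
        ∫ τ in (0:ℝ)..t, bmHitDensity L (t - τ) *
          ∑' k : ℤ, (v + 2 * (k : ℝ) * L) / Real.sqrt (2 * Real.pi * τ ^ 3) *
            Real.exp (-(v + 2 * (k : ℝ) * L) ^ 2 / (2 * τ)) := by
  have hL : 0 < L := by linarith
  have hbm : ∀ c s : ℝ, c / Real.sqrt (2 * Real.pi * s ^ 3) * Real.exp (-c ^ 2 / (2 * s))
      = bmHitDensity c s := fun c s => rfl
  simp_rw [hbm]
  -- per-term integral value
  have hterm : ∀ k : ℤ,
      (∫ τ in Ioo (0:ℝ) t, bmHitDensity L (t-τ) * bmHitDensity (v + 2*(k:ℝ)*L) τ)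
        = -(bmHitDensity (u + 2*((eta k : ℤ):ℝ)*L) t) := by
    intro k
    rcases le_or_gt 0 k with hk | hk
    · have hk' : (0:ℝ) ≤ (k:ℝ) := by exact_mod_cast hk
      have hdk : 0 < v + 2*(k:ℝ)*L := by nlinarith
      rw [(conv_lemma hL hdk ht).2]
      have heta : ((eta k : ℤ) : ℝ) = -(k:ℝ) - 1 := by
        unfold eta; rw [if_pos hk]; push_cast; ring
      rw [heta, show u + 2*(-(k:ℝ)-1)*L = -(L + (v + 2*(k:ℝ)*L)) from by
        have huL : u = L - v := by linarith
        rw [huL]; ring]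
      rw [bm_neg, neg_neg]
    · have hk' : (k:ℝ) ≤ -1 := by exact_mod_cast (by omega : k ≤ -1)
      have hdk : 0 < -(v + 2*(k:ℝ)*L) := by nlinarith
      have hrw : ∀ τ : ℝ, bmHitDensity L (t-τ) * bmHitDensity (v + 2*(k:ℝ)*L) τ
          = -(bmHitDensity L (t-τ) * bmHitDensity (-(v + 2*(k:ℝ)*L)) τ) := by
        intro τ; rw [bm_neg]; ring
      simp_rw [hrw]
      rw [integral_neg, (conv_lemma hL hdk ht).2]
      have heta : ((eta k : ℤ) : ℝ) = -(k:ℝ) := by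
        unfold eta; rw [if_neg (by omega)]; push_cast; ring
      rw [heta, show u + 2*(-(k:ℝ))*L = L + -(v + 2*(k:ℝ)*L) from by
        have huL : u = L - v := by linarith
        rw [huL]; ring]
  -- per-term integrability
  have hterm_int : ∀ k : ℤ,
      IntegrableOn (fun τ => bmHitDensity L (t-τ) * bmHitDensity (v + 2*(k:ℝ)*L) τ)
        (Ioo 0 t) := by
    intro k
    rcases le_or_gt 0 k with hk | hk
    · have hk' : (0:ℝ) ≤ (k:ℝ) := by exact_mod_cast hk
      have hdk : 0 < v + 2*(k:ℝ)*L := by nlinarith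
      exact (conv_lemma hL hdk ht).1
    · have hk' : (k:ℝ) ≤ -1 := by exact_mod_cast (by omega : k ≤ -1)
      have hdk : 0 < -(v + 2*(k:ℝ)*L) := by nlinarith
      refine ((conv_lemma hL hdk ht).1.neg).congr (ae_of_all _ fun τ => ?_)
      simp only [Pi.neg_apply]
      rw [bm_neg]
      ring
  -- nonvanishing
  have hne : ∀ k : ℤ, v + 2*(k:ℝ)*L ≠ 0 := by
    intro k
    rcases le_or_gt 0 k with hk | hk
    · have hk' : (0:ℝ) ≤ (k:ℝ) := by exact_mod_cast hk
      nlinarith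
    · have hk' : (k:ℝ) ≤ -1 := by exact_mod_cast (by omega : k ≤ -1)
      nlinarith
  -- integral of absolute values
  have habs : ∀ k : ℤ,
      (∫ τ in Ioo (0:ℝ) t, |bmHitDensity L (t-τ) * bmHitDensity (v + 2*(k:ℝ)*L) τ|)
        = bmHitDensity (L + |v + 2*(k:ℝ)*L|) t := by
    intro k
    have habs_pos : 0 < |v + 2*(k:ℝ)*L| := abs_pos.2 (hne k)
    have heq : EqOn (fun τ => |bmHitDensity L (t-τ) * bmHitDensity (v + 2*(k:ℝ)*L) τ|)
        (fun τ => bmHitDensity L (t-τ) * bmHitDensity |v + 2*(k:ℝ)*L| τ) (Ioo 0 t) := by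
      intro τ _
      simp only
      rw [abs_mul, bm_abs, bm_abs, abs_of_pos hL]
    rw [setIntegral_congr_fun measurableSet_Ioo heq, (conv_lemma hL habs_pos ht).2]
  -- measurability
  have hmeas : ∀ k : ℤ, AEStronglyMeasurable
      (fun τ => bmHitDensity L (t-τ) * bmHitDensity (v + 2*(k:ℝ)*L) τ)
      (volume.restrict (Ioo 0 t)) := by
    intro k
    exact (((bm_meas L).comp (measurable_const.sub measurable_id)).mul
      (bm_meas _)).aestronglyMeasurable
  -- lintegral bound
  have hlint : (∑' k : ℤ, ∫⁻ τ in Ioo (0:ℝ) t,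
      ‖bmHitDensity L (t-τ) * bmHitDensity (v + 2*(k:ℝ)*L) τ‖₊) ≠ ⊤ := by
    have heach : ∀ k : ℤ, (∫⁻ τ in Ioo (0:ℝ) t,
        ‖bmHitDensity L (t-τ) * bmHitDensity (v + 2*(k:ℝ)*L) τ‖₊)
          = ENNReal.ofReal (bmHitDensity (L + |v + 2*(k:ℝ)*L|) t) := by
      intro k
      calc (∫⁻ τ in Ioo (0:ℝ) t, ‖bmHitDensity L (t-τ) * bmHitDensity (v + 2*(k:ℝ)*L) τ‖₊)
          = ∫⁻ τ in Ioo (0:ℝ) t,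
              ENNReal.ofReal |bmHitDensity L (t-τ) * bmHitDensity (v + 2*(k:ℝ)*L) τ| := by
            refine lintegral_congr fun τ => ?_; rw [← Real.norm_eq_abs]; exact (ofReal_norm (bmHitDensity L (t-τ) * bmHitDensity (v + 2*(k:ℝ)*L) τ)).symm
        _ = ENNReal.ofReal (∫ τ in Ioo (0:ℝ) t,
              |bmHitDensity L (t-τ) * bmHitDensity (v + 2*(k:ℝ)*L) τ|) :=
            (ofReal_integral_eq_lintegral_ofReal (hterm_int k).abs
              (ae_of_all _ fun τ => abs_nonneg _)).symm
        _ = ENNReal.ofReal (bmHitDensity (L + |v + 2*(k:ℝ)*L|) t) := by rw [habs k]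
    simp_rw [heach]
    rw [← ENNReal.ofReal_tsum_of_nonneg
      (fun k => bm_nonneg (by positivity) t) (summable_bm_shift ht hL v)]
    exact ENNReal.ofReal_ne_top
  have hswap := integral_tsum hmeas hlint
  -- reindexing
  have hsum := summable_bm ht hL u
  have hIte : (∑' k : ℤ, bmHitDensity (u + 2*((eta k : ℤ):ℝ)*L) t)
      = ∑' j : ℤ, (if j = 0 then 0 else bmHitDensity (u + 2*(j:ℝ)*L) t) := by
    have hsupp : Function.support
        (fun j : ℤ => if j = 0 then 0 else bmHitDensity (u + 2*(j:ℝ)*L) t)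
          ⊆ Set.range eta := by
      intro j hj
      by_cases h : j = 0
      · simp [h] at hj
      · exact eta_range h
    have := Function.Injective.tsum_eq eta_inj hsupp
    rw [← this]
    exact tsum_congr fun k => (if_neg (eta_ne_zero k)).symm
  have hsplit0 := Summable.tsum_eq_add_tsum_ite hsum 0
  have h00 : bmHitDensity (u + 2*((0:ℤ):ℝ)*L) t = bmHitDensity u t := by norm_num
  -- final computation
  have hX : (∫ τ in (0:ℝ)..t, bmHitDensity L (t - τ) *
      ∑' k : ℤ, bmHitDensity (v + 2*(k:ℝ)*L) τ)
        = -((∑' k : ℤ, bmHitDensity (u + 2*(k:ℝ)*L) t) - bmHitDensity u t) := by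
    rw [intervalIntegral.integral_of_le ht.le, integral_Ioc_eq_integral_Ioo]
    calc (∫ τ in Ioo (0:ℝ) t, bmHitDensity L (t - τ) *
          ∑' k : ℤ, bmHitDensity (v + 2*(k:ℝ)*L) τ)
        = ∫ τ in Ioo (0:ℝ) t, ∑' k : ℤ,
            bmHitDensity L (t - τ) * bmHitDensity (v + 2*(k:ℝ)*L) τ :=
          setIntegral_congr_fun measurableSet_Ioo (fun τ _ => tsum_mul_left.symm)
      _ = ∑' k : ℤ, ∫ τ in Ioo (0:ℝ) t,
            bmHitDensity L (t - τ) * bmHitDensity (v + 2*(k:ℝ)*L) τ := hswap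
      _ = ∑' k : ℤ, -(bmHitDensity (u + 2*((eta k : ℤ):ℝ)*L) t) := tsum_congr hterm
      _ = -(∑' k : ℤ, bmHitDensity (u + 2*((eta k : ℤ):ℝ)*L) t) := tsum_neg
      _ = -((∑' k : ℤ, bmHitDensity (u + 2*(k:ℝ)*L) t) - bmHitDensity u t) := by
          rw [hIte]
          rw [h00] at hsplit0
          rw [hsplit0]
          ring
  rw [hX]
  ring

end BMAux

theorem stmt_18 (a x0 b : ℝ) (hax : a < x0) (hxb : x0 < b) :
    ∀ t : ℝ, 0 < t →
      (∑' k : ℤ, (x0 - a + 2 * (k : ℝ) * (b - a)) / Real.sqrt (2 * Real.pi * t ^ 3) *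
          Real.exp (-(x0 - a + 2 * (k : ℝ) * (b - a)) ^ 2 / (2 * t))) =
        bmHitDensity (x0 - a) t -
          (∫ τ in (0 : ℝ)..t, bmHitDensity (b - a) (t - τ) *
            ∑' k : ℤ, (b - x0 + 2 * (k : ℝ) * (b - a)) / Real.sqrt (2 * Real.pi * τ ^ 3) *
              Real.exp (-(b - x0 + 2 * (k : ℝ) * (b - a)) ^ 2 / (2 * τ))) ∧
      (∑' k : ℤ, (b - x0 + 2 * (k : ℝ) * (b - a)) / Real.sqrt (2 * Real.pi * t ^ 3) *
          Real.exp (-(b - x0 + 2 * (k : ℝ) * (b - a)) ^ 2 / (2 * t))) =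
        bmHitDensity (b - x0) t -
          ∫ τ in (0 : ℝ)..t, bmHitDensity (b - a) (t - τ) *
            ∑' k : ℤ, (x0 - a + 2 * (k : ℝ) * (b - a)) / Real.sqrt (2 * Real.pi * τ ^ 3) *
              Real.exp (-(x0 - a + 2 * (k : ℝ) * (b - a)) ^ 2 / (2 * τ)) := by
  intro t ht
  exact ⟨main_aux (b - a) (x0 - a) (b - x0) t (by linarith) (by linarith) (by ring) ht,
    main_aux (b - a) (b - x0) (x0 - a) t (by linarith) (by linarith) (by ring) ht⟩
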